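/- For a Hermitian matrix ρ, the vector of diagonal entries of ρ is majorized by the vector of eigenvalues of ρ (Schur's theorem). -/

import Mathlib

open Matrix

/-- Sum of the `k` largest entries of `x`. -/
noncomputable def kLargestSum {n : ℕ} (x : Fin n → ℝ) (k : ℕ) : ℝ :=
  sSup ((fun s : Finset (Fin n) => ∑ i ∈ s, x i) '' {s | s.card = k})

/-- `x` is majorized by `y` in `ℝⁿ`. -/
def Maj {n : ℕ} (x y : Fin n → ℝ) : Prop :=
  (∀ k, k < n → kLargestSum x k ≤ kLargestSum y k) ∧ (∑ i, x i = ∑ i, y i)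

lemma exists_topk {n : ℕ} (lam : Fin n → ℝ) :
    ∀ k, k ≤ n → ∃ t : Finset (Fin n), t.card = k ∧
      ∀ i ∈ t, ∀ m, m ∉ t → lam m ≤ lam i := by
  intro k
  induction k with
  | zero => exact fun _ => ⟨∅, rfl, by simp⟩
  | succ k ih =>
    intro hk
    obtain ⟨t, htc, htp⟩ := ih (Nat.le_of_succ_le hk)
    have hne : (tᶜ : Finset (Fin n)).Nonempty := by
      rw [← Finset.card_pos, Finset.card_compl, htc, Fintype.card_fin]
      omega
    obtain ⟨j, hj, hjmax⟩ := Finset.exists_max_image tᶜ lam hne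
    have hjt : j ∉ t := by simpa using hj
    refine ⟨insert j t, by rw [Finset.card_insert_of_notMem hjt, htc], ?_⟩
    intro i hi m hm
    have hmt : m ∉ t := fun h => hm (Finset.mem_insert_of_mem h)
    rcases Finset.mem_insert.mp hi with rfl | hi
    · exact hjmax m (by simpa using hmt)
    · exact htp i hi m hmt

lemma combo_le {n : ℕ} (lam c : Fin n → ℝ) (k : ℕ) (t : Finset (Fin n))
    (htc : t.card = k) (htp : ∀ i ∈ t, ∀ m, m ∉ t → lam m ≤ lam i)
    (hc0 : ∀ j, 0 ≤ c j) (hc1 : ∀ j, c j ≤ 1) (hcs : ∑ j, c j = k) :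
    ∑ j, c j * lam j ≤ ∑ j ∈ t, lam j := by
  rcases t.eq_empty_or_nonempty with rfl | hne
  · have h0 : ∀ j ∈ Finset.univ, c j = 0 := by
      rw [← Finset.sum_eq_zero_iff_of_nonneg (fun j _ => hc0 j), hcs, ← htc]
      simp
    rw [Finset.sum_congr rfl fun j hj => by rw [h0 j hj, zero_mul]]
    simp
  · obtain ⟨i₀, hi₀, hmin⟩ := Finset.exists_min_image t lam hne
    set d : Fin n → ℝ := fun j => if j ∈ t then 1 else 0 with hd
    have hds : ∑ j, d j = (k : ℝ) := by
      simp [hd, Finset.sum_ite_mem, htc]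
    have hts : ∑ j ∈ t, lam j = ∑ j, d j * lam j := by
      simp [hd, ite_mul, Finset.sum_ite_mem]
    have step : ∀ j, c j * lam j ≤ d j * lam j + (c j - d j) * lam i₀ := by
      intro j
      by_cases hjt : j ∈ t
      · have h1 : lam i₀ ≤ lam j := hmin j hjt
        have h2 : d j = 1 := by simp [hd, hjt]
        nlinarith [hc1 j]
      · have h1 : lam j ≤ lam i₀ := htp i₀ hi₀ j hjt
        have h2 : d j = 0 := by simp [hd, hjt]
        nlinarith [hc0 j]
    calc ∑ j, c j * lam j ≤ ∑ j, (d j * lam j + (c j - d j) * lam i₀) :=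
          Finset.sum_le_sum fun j _ => step j
      _ = ∑ j, d j * lam j + (∑ j, c j - ∑ j, d j) * lam i₀ := by
          rw [Finset.sum_add_distrib, ← Finset.sum_mul, ← Finset.sum_sub_distrib]
      _ = ∑ j ∈ t, lam j := by rw [hcs, hds, hts]; ring

theorem diag_majorized_by_eigenvalues {n : ℕ} (ρ : Matrix (Fin n) (Fin n) ℂ)
    (hρ : ρ.IsHermitian) :
    Maj (fun i => (ρ i i).re) hρ.eigenvalues := by
  set U : Matrix (Fin n) (Fin n) ℂ := (hρ.eigenvectorUnitary : Matrix (Fin n) (Fin n) ℂ) with hU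
  set lam := hρ.eigenvalues with hlam
  set w : Fin n → Fin n → ℝ := fun i j => Complex.normSq (U i j) with hw
  have hw0 : ∀ i j, 0 ≤ w i j := fun i j => Complex.normSq_nonneg _
  have hdiag : ∀ i, (ρ i i).re = ∑ j, w i j * lam j := by
    intro i
    have h : ρ i i = ∑ j, (lam j : ℂ) * Complex.normSq (U i j) := by
      conv_lhs => rw [hρ.spectral_theorem, Unitary.conjStarAlgAut_apply]
      rw [mul_assoc, mul_apply]
      refine Finset.sum_congr rfl fun j _ => ?_
      rw [diagonal_mul]
      simp only [Function.comp_apply, star_apply]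
      rw [show (star (U i j) : ℂ) = starRingEnd ℂ (U i j) from rfl,
        mul_comm (U i j), mul_assoc, mul_comm _ (U i j), Complex.mul_conj]
      rfl
    rw [h, Complex.re_sum]
    refine Finset.sum_congr rfl fun j _ => ?_
    simp [hw, mul_comm]
  have hUmem := hρ.eigenvectorUnitary.2
  have hrow : ∀ i, ∑ j, w i j = 1 := by
    intro i
    have h1 : (U * star U) i i = 1 := by
      rw [(Matrix.mem_unitaryGroup_iff).mp hUmem]
      simp
    rw [mul_apply] at h1
    have : ∀ j, U i j * star U j i = (Complex.normSq (U i j) : ℂ) := by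
      intro j
      rw [star_apply, show (star (U i j) : ℂ) = starRingEnd ℂ (U i j) from rfl,
        Complex.mul_conj]
    rw [Finset.sum_congr rfl fun j _ => this j] at h1
    have h2 := congrArg Complex.re h1
    rw [Complex.re_sum] at h2
    simpa using h2
  have hcol : ∀ j, ∑ i, w i j = 1 := by
    intro j
    have h1 : (star U * U) j j = 1 := by
      rw [(Matrix.mem_unitaryGroup_iff').mp hUmem]
      simp
    rw [mul_apply] at h1
    have : ∀ i, star U j i * U i j = (Complex.normSq (U i j) : ℂ) := by
      intro i
      rw [star_apply, show (star (U i j) : ℂ) = starRingEnd ℂ (U i j) from rfl,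
        mul_comm, Complex.mul_conj]
    rw [Finset.sum_congr rfl fun i _ => this i] at h1
    have h2 := congrArg Complex.re h1
    rw [Complex.re_sum] at h2
    simpa using h2
  constructor
  · intro k hk
    have hSne : ((fun s : Finset (Fin n) => ∑ i ∈ s, (fun i => (ρ i i).re) i) ''
        {s | s.card = k}).Nonempty := by
      obtain ⟨s, _, hs⟩ := Finset.exists_subset_card_eq
        (s := (Finset.univ : Finset (Fin n))) (n := k) (by simp [Nat.le_of_lt hk])
      exact ⟨_, ⟨s, hs, rfl⟩⟩
    apply csSup_le hSne
    rintro v ⟨s, hs, rfl⟩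
    simp only [Set.mem_setOf_eq] at hs
    set c : Fin n → ℝ := fun j => ∑ i ∈ s, w i j with hc
    have hc0 : ∀ j, 0 ≤ c j := fun j => Finset.sum_nonneg fun i _ => hw0 i j
    have hc1 : ∀ j, c j ≤ 1 := by
      intro j
      calc c j ≤ ∑ i, w i j :=
            Finset.sum_le_sum_of_subset_of_nonneg (Finset.subset_univ s)
              (fun i _ _ => hw0 i j)
        _ = 1 := hcol j
    have hcs : ∑ j, c j = (k : ℝ) := by
      rw [hc]
      rw [Finset.sum_comm]
      rw [Finset.sum_congr rfl fun i _ => hrow i]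
      simp [hs]
    have hsum : ∑ i ∈ s, (ρ i i).re = ∑ j, c j * lam j := by
      rw [Finset.sum_congr rfl fun i _ => hdiag i, Finset.sum_comm]
      exact Finset.sum_congr rfl fun j _ => by rw [hc, Finset.sum_mul]
    obtain ⟨t, htc, htp⟩ := exists_topk lam k (Nat.le_of_lt hk)
    have hle : ∑ i ∈ s, (ρ i i).re ≤ ∑ j ∈ t, lam j := by
      rw [hsum]; exact combo_le lam c k t htc htp hc0 hc1 hcs
    refine hle.trans (le_csSup ?_ ⟨t, htc, rfl⟩)
    exact ((Set.toFinite _).image _).bddAbove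
  · rw [Finset.sum_congr rfl fun i _ => hdiag i, Finset.sum_comm]
    refine Finset.sum_congr rfl fun j _ => ?_
    rw [← Finset.sum_mul, hcol j, one_mul]
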